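/- Let A be an m×n complex matrix and c a vector in ℂ^m with c ≠ 0, and suppose the linear system A·x = c is consistent (has at least one solution). Then the solution set of A·x = c is exactly { G·c | G is an n×m complex matrix with A·G·A = A }, i.e. every vector of the form G·c with G a {1}-inverse of A solves the system, and every solution arises as G·c for some {1}-inverse G of A. -/

import Mathlib

lemma exists_oneInv {m n : ℕ} (A : Matrix (Fin m) (Fin n) ℂ) :
    ∃ G : Matrix (Fin n) (Fin m) ℂ, A * G * A = A := by
  set f := A.mulVecLin with hf
  obtain ⟨q, hq⟩ := Submodule.exists_isCompl (LinearMap.range f)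
  obtain ⟨s, hs⟩ := f.rangeRestrict.exists_rightInverse_of_surjective
    (LinearMap.range_rangeRestrict f)
  set π := (LinearMap.range f).linearProjOfIsCompl q hq with hπ
  refine ⟨LinearMap.toMatrix' (s ∘ₗ π), ?_⟩
  have key : ∀ x, f ((s ∘ₗ π) (f x)) = f x := by
    intro x
    have h1 : π (f x) = ⟨f x, LinearMap.mem_range_self f x⟩ := by
      exact Submodule.linearProjOfIsCompl_apply_left hq ⟨f x, LinearMap.mem_range_self f x⟩
    have h2 : f.rangeRestrict (s ⟨f x, LinearMap.mem_range_self f x⟩) = ⟨f x, LinearMap.mem_range_self f x⟩ := by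
      have := LinearMap.congr_fun hs ⟨f x, LinearMap.mem_range_self f x⟩
      exact this
    simp only [LinearMap.comp_apply, h1]
    exact congrArg Subtype.val h2
  apply LinearMap.toMatrix'.symm.injective
  refine LinearMap.ext fun x => ?_
  simp only [Matrix.toLin'_mul, LinearMap.comp_apply, LinearMap.toMatrix'_symm,
    Matrix.toLin'_toMatrix']
  have : Matrix.toLin' A = f := rfl
  rw [this]
  exact key x

theorem general_solution_by_one_inverses {m n : ℕ}
    (A : Matrix (Fin m) (Fin n) ℂ) (c : Fin m → ℂ) (hc : c ≠ 0)
    (hcons : ∃ x : Fin n → ℂ, A.mulVec x = c) :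
    {x : Fin n → ℂ | A.mulVec x = c} =
      {x : Fin n → ℂ | ∃ G : Matrix (Fin n) (Fin m) ℂ,
        A * G * A = A ∧ x = G.mulVec c} := by
  obtain ⟨x₀, hx₀⟩ := hcons
  ext x
  simp only [Set.mem_setOf_eq]
  constructor
  · intro hx
    obtain ⟨G₀, hG₀⟩ := exists_oneInv A
    obtain ⟨i₀, hi₀⟩ : ∃ i, c i ≠ 0 := by
      by_contra h; push_neg at h; exact hc (funext fun i => h i)
    set v : Fin m → ℂ := fun j => if j = i₀ then (c i₀)⁻¹ else 0 with hv
    set d : Fin n → ℂ := x - G₀.mulVec c with hd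
    set E : Matrix (Fin n) (Fin m) ℂ := Matrix.of (fun i j => d i * v j) with hE
    have hG₀c : A.mulVec (G₀.mulVec c) = c := by
      rw [← hx, Matrix.mulVec_mulVec, Matrix.mulVec_mulVec, hG₀]
    have hAd : A.mulVec d = 0 := by
      rw [hd, Matrix.mulVec_sub, hG₀c, hx, sub_self]
    have hAE : A * E = 0 := by
      ext i j
      simp only [Matrix.mul_apply, hE, Matrix.of_apply, Matrix.zero_apply]
      have h0 : ∑ k, A i k * (d k * v j) = (∑ k, A i k * d k) * v j := by
        rw [Finset.sum_mul]; apply Finset.sum_congr rfl; intros; ring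
      have h1 : ∑ k, A i k * d k = A.mulVec d i := rfl
      rw [h0, h1, hAd]
      simp
    refine ⟨G₀ + E, ?_, ?_⟩
    · rw [Matrix.mul_add, Matrix.add_mul, hG₀, hAE, Matrix.zero_mul, add_zero]
    · have hEc : E.mulVec c = d := by
        funext i
        simp only [Matrix.mulVec, dotProduct, hE, Matrix.of_apply, hv]
        rw [Finset.sum_eq_single i₀]
        · rw [if_pos rfl]; field_simp
        · intro b _ hb; simp [hb]
        · intro h; simp at h
      rw [Matrix.add_mulVec, hEc, hd]
      abel
  · rintro ⟨G, hG, rfl⟩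
    rw [← hx₀, Matrix.mulVec_mulVec, Matrix.mulVec_mulVec, hG]
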